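/- Let X = Σ_{x ∈ S} U_x, where S is an inhomogeneous Poisson point process on (0,1] with intensity λ(x) = 1/(2x) and, conditionally on S, the U_x are independent with U_x uniform on [0,x]. Then the cumulant generating function of X is K(z) = ∫_0^z (e^y − 1 − y)/(2y²) dy, and consequently the n-th cumulant of X equals 1/(2n(n+1)) for all n ≥ 1. -/

import Mathlib

open MeasureTheory ProbabilityTheory Real

/-- The cumulant generating function `K(z) = ∫_0^z (e^y - 1 - y)/(2y²) dy`. -/
noncomputable def K (z : ℝ) : ℝ :=
  ∫ y in (0:ℝ)..z, (Real.exp y - 1 - y) / (2 * y ^ 2)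

section Aux

/-- Taylor coefficients of `K` at `0`. -/
noncomputable def Kc (n : ℕ) : ℝ := 1 / (2 * n * (Nat.factorial (n + 1)))

open Nat

lemma hasSum_g (t : ℝ) (ht : t ≠ 0) :
    HasSum (fun k : ℕ => t ^ k / (2 * (k + 2)!)) ((Real.exp t - 1 - t) / (2 * t ^ 2)) := by
  have h : HasSum (fun n : ℕ => t ^ n / n !) (Real.exp t) := by
    simpa [Real.exp_eq_exp_ℝ] using NormedSpace.expSeries_div_hasSum_exp (𝔸 := ℝ) t
  have h2 : HasSum (fun k : ℕ => t ^ (k + 2) / (k + 2)!)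
      (Real.exp t - ∑ i ∈ Finset.range 2, t ^ i / i !) := (hasSum_nat_add_iff' 2).mpr h
  have h3 := h2.div_const (2 * t ^ 2)
  have hs : ∑ i ∈ Finset.range 2, t ^ i / i ! = 1 + t := by
    simp [Finset.sum_range_succ]
  rw [hs] at h3
  convert h3 using 2 with k
  · rfl
  · field_simp; ring
  · ring

lemma summable_bound (y : ℝ) : Summable (fun k : ℕ => |y| ^ k / (2 * ((k + 2)! : ℝ))) := by
  refine Summable.of_nonneg_of_le (fun k => by positivity) (fun k => ?_)
    (Real.summable_pow_div_factorial |y|)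
  apply div_le_div_of_nonneg_left (by positivity) (by positivity)
  calc ((k ! : ℝ)) ≤ ((k+2)! : ℝ) := by exact_mod_cast Nat.factorial_le (by omega)
    _ ≤ 2 * ((k+2)! : ℝ) := by
      have : (0:ℝ) < ((k+2)! : ℝ) := by exact_mod_cast Nat.factorial_pos (k+2)
      linarith

lemma hasSum_K (y : ℝ) : HasSum (fun n : ℕ => Kc n * y ^ n) (K y) := by
  have hint : HasSum (fun k : ℕ => ∫ t in (0:ℝ)..y, t ^ k / (2 * (k + 2)!)) (K y) := by
    apply intervalIntegral.hasSum_integral_of_dominated_convergence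
      (bound := fun k _ => |y| ^ k / (2 * (k + 2)!))
    · intro k
      exact (Continuous.aestronglyMeasurable (by continuity))
    · intro k
      filter_upwards with t ht
      have h1 : |t| ≤ |y| := by
        rw [Set.mem_uIoc] at ht
        rw [abs_le]
        rcases ht with ⟨ha, hb⟩ | ⟨ha, hb⟩ <;> constructor <;>
          nlinarith [le_abs_self y, neg_abs_le y]
      have h2 : ‖t ^ k / (2 * ((k+2)! : ℝ))‖ = |t| ^ k / (2 * ((k+2)! : ℝ)) := by
        rw [Real.norm_eq_abs, abs_div, abs_pow, abs_of_pos (by positivity : (0:ℝ) < 2 * (k+2)!)]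
      rw [h2]
      gcongr
    · filter_upwards with t _
      exact summable_bound y
    · exact intervalIntegrable_const
    · have h0 : ∀ᵐ t : ℝ, t ≠ 0 := by
        refine ae_iff.2 ?_
        simp only [ne_eq, not_not, Set.setOf_eq_eq_singleton]
        exact Real.volume_singleton
      filter_upwards [h0] with t ht _
      exact hasSum_g t ht
  have heq : ∀ k : ℕ, (∫ t in (0:ℝ)..y, t ^ k / (2 * (k + 2)!)) = Kc (k + 1) * y ^ (k + 1) := by
    intro k
    rw [intervalIntegral.integral_div, integral_pow]
    unfold Kc
    push_cast [Nat.factorial_succ (k+1)]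
    have hk1 : ((k : ℝ) + 1) ≠ 0 := by positivity
    have hk2 : ((k + 1)! : ℝ) ≠ 0 := by positivity
    field_simp
    ring_nf
  rw [funext heq] at hint
  have h4 : HasSum (fun k : ℕ => Kc (k+1) * y^(k+1))
      (K y - ∑ i ∈ Finset.range 1, Kc i * y ^ i) := by
    simpa [Kc] using hint
  exact (hasSum_nat_add_iff' 1).mp h4

lemma Kc_nonneg (n : ℕ) : 0 ≤ Kc n := by unfold Kc; positivity

lemma Kc_le (n : ℕ) : Kc n ≤ 1 / (n ! : ℝ) := by
  unfold Kc
  rcases Nat.eq_zero_or_pos n with h | h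
  · subst h; simp [Kc]
  · apply div_le_div_of_nonneg_left one_pos.le (by positivity)
    have h1 : (n ! : ℝ) ≤ ((n+1)! : ℝ) := by exact_mod_cast Nat.factorial_le (by omega)
    have h2 : (1 : ℝ) ≤ 2 * n := by
      have : (1:ℝ) ≤ (n:ℝ) := by exact_mod_cast h
      linarith
    have h3 : (0:ℝ) < ((n+1)! : ℝ) := by positivity
    nlinarith

open FormalMultilinearSeries in
lemma Kc_radius_top : (ofScalars ℝ Kc).radius = ⊤ := by
  apply ENNReal.eq_top_of_forall_nnreal_le
  intro r
  apply le_radius_of_summable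
  refine Summable.of_nonneg_of_le (fun n => by positivity) (fun n => ?_)
    (Real.summable_pow_div_factorial r)
  rw [ofScalars_norm]
  rw [Real.norm_eq_abs, abs_of_nonneg (Kc_nonneg n)]
  calc Kc n * (r:ℝ) ^ n ≤ (1 / (n ! : ℝ)) * (r:ℝ) ^ n :=
        mul_le_mul_of_nonneg_right (Kc_le n) (by positivity)
    _ = (r:ℝ) ^ n / (n ! : ℝ) := by ring

open FormalMultilinearSeries in
lemma hK_series : HasFPowerSeriesOnBall K (ofScalars ℝ Kc) 0 ⊤ := by
  refine ⟨le_of_eq Kc_radius_top.symm, ENNReal.zero_lt_top, fun hy => ?_⟩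
  rw [zero_add]
  simp only [ofScalars_apply_eq, smul_eq_mul]
  exact hasSum_K _

open FormalMultilinearSeries in
lemma iteratedDeriv_K (n : ℕ) (hn : 1 ≤ n) :
    iteratedDeriv n K 0 = 1 / (2 * n * (n + 1)) := by
  have h := hK_series.factorial_smul (1 : ℝ) n
  rw [ofScalars_apply_eq, smul_eq_mul, one_pow, mul_one] at h
  rw [iteratedDeriv_eq_iteratedFDeriv, ← h, nsmul_eq_mul]
  unfold Kc
  have hn0 : (n : ℝ) ≠ 0 := by
    have : (1:ℝ) ≤ (n:ℝ) := by exact_mod_cast hn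
    linarith
  have hf : ((n+1)! : ℝ) = ((n:ℝ)+1) * (n ! : ℝ) := by
    push_cast [Nat.factorial_succ]
    ring
  rw [hf]
  have hfn : (n ! : ℝ) ≠ 0 := by positivity
  field_simp

end Aux

/-- For `X = Σ_{x ∈ S} U_x` with `S` a Poisson process on `(0,1]` of intensity
`1/(2x)` and independent marks `U_x ~ Unif[0,x]`, Campbell's theorem gives the
moment generating function stated in the hypothesis; then the cumulant
generating function of `X` is `K` and the n-th cumulant is `1/(2n(n+1))`. -/
theorem stmt8 {Ω : Type*} [MeasurableSpace Ω] (μ : Measure Ω) [IsProbabilityMeasure μ]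
    (X : Ω → ℝ)
    (hX : ∀ z : ℝ, mgf X μ z =
      Real.exp (∫ x in Set.Ioc (0:ℝ) 1,
        ((Real.exp (x * z) - 1) / (x * z) - 1) * (1 / (2 * x)))) :
    (∀ z : ℝ, cgf X μ z = K z) ∧
    ∀ n : ℕ, 1 ≤ n → iteratedDeriv n K 0 = 1 / (2 * n * (n + 1)) := by
  constructor
  · intro z
    rcases eq_or_ne z 0 with rfl | hz
    · rw [cgf, mgf_zero', probReal_univ, Real.log_one]
      simp [K]
    · rw [cgf, hX z, Real.log_exp]
      rw [← intervalIntegral.integral_of_le zero_le_one]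
      have heq : ∀ x : ℝ, ((Real.exp (x * z) - 1) / (x * z) - 1) * (1 / (2 * x))
          = z • ((Real.exp (x * z) - 1 - (x * z)) / (2 * (x * z) ^ 2)) := by
        intro x
        rcases eq_or_ne x 0 with rfl | hx
        · simp
        · have hxz : x * z ≠ 0 := mul_ne_zero hx hz
          rw [smul_eq_mul]
          field_simp
      rw [intervalIntegral.integral_congr (fun x _ => heq x)]
      rw [intervalIntegral.integral_smul]
      rw [intervalIntegral.integral_comp_mul_right
        (f := fun y => (Real.exp y - 1 - y) / (2 * y ^ 2)) hz]
      rw [zero_mul, one_mul, smul_smul, mul_inv_cancel₀ hz, one_smul]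
      rfl
  · exact iteratedDeriv_K
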